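/- Let H ∈ (0,1). The function φ(θ) = φ(cos θ, sin θ) satisfies φ(θ) / θ^{2H} → 1 as θ ↓ 0. -/

import Mathlib

open MeasureTheory Real Filter Topology

noncomputable section

/-- `φ(t,v) = t^{2H} v^{2H} − ¼(t^{2H} + v^{2H} − |t−v|^{2H})²`. -/
def phiFun (H t v : ℝ) : ℝ :=
  t ^ (2 * H) * v ^ (2 * H) - (t ^ (2 * H) + v ^ (2 * H) - |t - v| ^ (2 * H)) ^ 2 / 4

/-- For `H ∈ (0,1)`, `φ(cos θ, sin θ) / θ^{2H} → 1` as `θ ↓ 0`. -/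
theorem phi_theta_asymp_zero (H : ℝ) (hH : H ∈ Set.Ioo (0 : ℝ) 1) :
    Tendsto (fun θ : ℝ => phiFun H (Real.cos θ) (Real.sin θ) / θ ^ (2 * H))
      (𝓝[>] (0 : ℝ)) (𝓝 1) := by
  obtain ⟨hH0, hH1⟩ := hH
  set g : ℝ → ℝ := fun θ => Real.cos θ ^ (2*H) - (Real.cos θ - Real.sin θ) ^ (2*H) with hgdef
  have hmono : 𝓝[>] (0:ℝ) ≤ 𝓝[≠] (0:ℝ) :=
    nhdsWithin_mono _ fun x hx => ne_of_gt hx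
  -- derivative of g at 0
  have hd1 : HasDerivAt (fun θ => Real.cos θ ^ (2*H)) 0 0 := by
    have := (Real.hasDerivAt_cos 0).rpow_const (p := 2*H) (by left; simp)
    simpa using this
  have hd2 : HasDerivAt (fun θ => (Real.cos θ - Real.sin θ) ^ (2*H)) (-(2*H)) 0 := by
    have h := ((Real.hasDerivAt_cos 0).sub (Real.hasDerivAt_sin 0)).rpow_const
      (p := 2*H) (by left; simp)
    simpa using h
  have hdg : HasDerivAt g (2*H) 0 := by
    have := hd1.sub hd2
    rw [zero_sub, neg_neg] at this
    exact this
  have hslope : Tendsto (fun θ => g θ / θ) (𝓝[>] (0:ℝ)) (𝓝 (2*H)) := by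
    have h := hasDerivAt_iff_tendsto_slope.mp hdg
    refine (h.mono_left hmono).congr' ?_
    filter_upwards [self_mem_nhdsWithin] with θ hθ
    simp [slope_def_field, hgdef, div_eq_mul_inv]
  -- sin θ / θ → 1
  have hsin : Tendsto (fun θ : ℝ => Real.sin θ / θ) (𝓝[>] (0:ℝ)) (𝓝 1) := by
    have h := hasDerivAt_iff_tendsto_slope.mp (Real.hasDerivAt_sin 0)
    rw [Real.cos_zero] at h
    refine (h.mono_left hmono).congr' ?_
    filter_upwards [self_mem_nhdsWithin] with θ hθ
    simp [slope_def_field]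
  have hrpow1 : ContinuousAt (fun x : ℝ => x ^ (2*H)) 1 :=
    Real.continuousAt_rpow_const 1 (2*H) (Or.inl one_ne_zero)
  have hB : Tendsto (fun θ : ℝ => (Real.sin θ / θ) ^ (2*H)) (𝓝[>] (0:ℝ)) (𝓝 1) := by
    have := hrpow1.tendsto.comp hsin
    simpa [Function.comp_def] using this
  have hA : Tendsto (fun θ : ℝ => Real.cos θ ^ (2*H)) (𝓝[>] (0:ℝ)) (𝓝 1) := by
    have hc : Tendsto Real.cos (𝓝[>] (0:ℝ)) (𝓝 1) := by
      have := Real.continuous_cos.tendsto 0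
      rw [Real.cos_zero] at this
      exact this.mono_left nhdsWithin_le_nhds
    have := hrpow1.tendsto.comp hc
    simpa [Function.comp_def] using this
  have hC : Tendsto (fun θ : ℝ => θ ^ (1 - H)) (𝓝[>] (0:ℝ)) (𝓝 0) := by
    have h := (Real.continuousAt_rpow_const 0 (1-H) (Or.inr (by linarith))).tendsto
    rw [Real.zero_rpow (by linarith : (1:ℝ)-H ≠ 0)] at h
    exact h.mono_left nhdsWithin_le_nhds
  have hD : Tendsto (fun θ : ℝ => θ ^ H) (𝓝[>] (0:ℝ)) (𝓝 0) := by
    have h := (Real.continuousAt_rpow_const 0 H (Or.inr hH0.le)).tendsto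
    rw [Real.zero_rpow (ne_of_gt hH0)] at h
    exact h.mono_left nhdsWithin_le_nhds
  -- the auxiliary function
  have hmain : Tendsto (fun θ : ℝ =>
      Real.cos θ ^ (2*H) * (Real.sin θ / θ) ^ (2*H)
        - ((g θ / θ) * θ ^ (1-H) + (Real.sin θ / θ) ^ (2*H) * θ ^ H) ^ 2 / 4)
      (𝓝[>] (0:ℝ)) (𝓝 1) := by
    have := (hA.mul hB).sub
      ((((hslope.mul hC).add (hB.mul hD)).pow 2).div_const 4)
    norm_num at this
    exact this
  refine hmain.congr' ?_
  filter_upwards [Ioo_mem_nhdsGT_of_mem (Set.mem_Ico.mpr ⟨le_refl 0, by positivity⟩ :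
      (0:ℝ) ∈ Set.Ico 0 (π/4))] with θ hθ
  obtain ⟨hθ0, hθ4⟩ := hθ
  have hs : 0 < Real.sin θ := Real.sin_pos_of_pos_of_lt_pi hθ0 (by linarith [Real.pi_pos])
  have hcs : Real.sin θ < Real.cos θ := by
    have h1 : Real.sin θ < Real.sin (π/4) :=
      Real.strictMonoOn_sin ⟨by linarith [Real.pi_pos], by linarith [Real.pi_pos]⟩
        ⟨by linarith [Real.pi_pos], by linarith [Real.pi_pos]⟩ hθ4
    have h2 : Real.cos (π/4) < Real.cos θ := by
      apply Real.cos_lt_cos_of_nonneg_of_le_pi hθ0.le (by linarith [Real.pi_pos]) hθ4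
    rw [Real.sin_pi_div_four] at h1
    rw [Real.cos_pi_div_four] at h2
    linarith
  have habs : |Real.cos θ - Real.sin θ| = Real.cos θ - Real.sin θ :=
    abs_of_pos (by linarith)
  set u : ℝ := θ ^ H with hu
  have hupos : 0 < u := Real.rpow_pos_of_pos hθ0 H
  have h2H : θ ^ (2*H) = u ^ 2 := by
    rw [hu, ← Real.rpow_natCast (θ ^ H) 2, ← Real.rpow_mul hθ0.le]
    norm_num [mul_comm]
  have h1H : θ ^ (1-H) = θ / u := by
    rw [hu, Real.rpow_sub hθ0, Real.rpow_one]
  have hsdiv : (Real.sin θ / θ) ^ (2*H) = Real.sin θ ^ (2*H) / u ^ 2 := by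
    rw [Real.div_rpow hs.le hθ0.le, h2H]
  simp only [phiFun, habs, hgdef, h2H, h1H, hsdiv]
  field_simp
  ring
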